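/- arXiv:1012.0291 — 6 statements merged into one kernel-verified Lean document; each statement's English description precedes it below -/
import Mathlib

section
/- For positive solutions (A,B,C) of A' = C/B + f, B' = C/A, C' = -C²/(AB) with f ≥ 0 on [0,∞), A and B are nondecreasing and C is nonincreasing; moreover C satisfies the lower bound C(t) ≥ A₀B₀C₀/(A₀B₀ + C₀ t) for all t ≥ 0. -/
open Set

/-- For the Nil³ `(RH)_c` system `A' = C/B + f`, `B' = C/A`, `C' = -C²/(AB)`
with `f ≥ 0` on `[0,∞)`, `A` and `B` are nondecreasing, `C` is nonincreasing,
and `C(t) ≥ A₀B₀C₀/(A₀B₀ + C₀ t)`. -/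
theorem nil3_monotonicity_and_C_lower_bound
    (A B C f : ℝ → ℝ)
    (hf : ∀ t ∈ Ici (0:ℝ), 0 ≤ f t)
    (hApos : ∀ t ∈ Ici (0:ℝ), 0 < A t)
    (hBpos : ∀ t ∈ Ici (0:ℝ), 0 < B t)
    (hCpos : ∀ t ∈ Ici (0:ℝ), 0 < C t)
    (hA : ∀ t ∈ Ici (0:ℝ), HasDerivAt A (C t / B t + f t) t)
    (hB : ∀ t ∈ Ici (0:ℝ), HasDerivAt B (C t / A t) t)
    (hC : ∀ t ∈ Ici (0:ℝ), HasDerivAt C (-(C t) ^ 2 / (A t * B t)) t) :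
    MonotoneOn A (Ici 0) ∧ MonotoneOn B (Ici 0) ∧ AntitoneOn C (Ici 0) ∧
    ∀ t ∈ Ici (0:ℝ), C t ≥ A 0 * B 0 * C 0 / (A 0 * B 0 + C 0 * t) := by
  have h0 : (0:ℝ) ∈ Ici (0:ℝ) := self_mem_Ici
  have hA0 := hApos 0 h0
  have hB0 := hBpos 0 h0
  have hC0 := hCpos 0 h0
  have monA : MonotoneOn A (Ici 0) := by
    apply monotoneOn_of_deriv_nonneg (convex_Ici 0)
      (fun t ht => (hA t ht).continuousAt.continuousWithinAt)
    · intro x hx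
      rw [interior_Ici] at hx
      exact (hA x (Ioi_subset_Ici_self hx)).differentiableAt.differentiableWithinAt
    · intro x hx
      rw [interior_Ici] at hx
      rw [(hA x (Ioi_subset_Ici_self hx)).deriv]
      have h1 := hCpos x (Ioi_subset_Ici_self hx)
      have h2 := hBpos x (Ioi_subset_Ici_self hx)
      have h3 := hf x (Ioi_subset_Ici_self hx)
      positivity
  have monB : MonotoneOn B (Ici 0) := by
    apply monotoneOn_of_deriv_nonneg (convex_Ici 0)
      (fun t ht => (hB t ht).continuousAt.continuousWithinAt)
    · intro x hx
      rw [interior_Ici] at hx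
      exact (hB x (Ioi_subset_Ici_self hx)).differentiableAt.differentiableWithinAt
    · intro x hx
      rw [interior_Ici] at hx
      rw [(hB x (Ioi_subset_Ici_self hx)).deriv]
      have h1 := hCpos x (Ioi_subset_Ici_self hx)
      have h2 := hApos x (Ioi_subset_Ici_self hx)
      positivity
  have antC : AntitoneOn C (Ici 0) := by
    apply antitoneOn_of_deriv_nonpos (convex_Ici 0)
      (fun t ht => (hC t ht).continuousAt.continuousWithinAt)
    · intro x hx
      rw [interior_Ici] at hx
      exact (hC x (Ioi_subset_Ici_self hx)).differentiableAt.differentiableWithinAt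
    · intro x hx
      rw [interior_Ici] at hx
      rw [(hC x (Ioi_subset_Ici_self hx)).deriv]
      have h1 := hCpos x (Ioi_subset_Ici_self hx)
      have h2 := hApos x (Ioi_subset_Ici_self hx)
      have h3 := hBpos x (Ioi_subset_Ici_self hx)
      have : (0:ℝ) ≤ (C x) ^ 2 := sq_nonneg _
      apply div_nonpos_of_nonpos_of_nonneg (by linarith) (by positivity)
  refine ⟨monA, monB, antC, ?_⟩
  -- lower bound
  set h : ℝ → ℝ := fun t => 1 / C 0 + t / (A 0 * B 0) - (C t)⁻¹ with hh
  have hderiv : ∀ t ∈ Ici (0:ℝ), HasDerivAt h (1 / (A 0 * B 0) - (A t * B t)⁻¹) t := by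
    intro t ht
    have hAt := hApos t ht
    have hBt := hBpos t ht
    have hCt := hCpos t ht
    have h1 : HasDerivAt (fun s : ℝ => 1 / C 0 + s / (A 0 * B 0)) (1 / (A 0 * B 0)) t := by
      simpa using ((hasDerivAt_id t).div_const (A 0 * B 0)).const_add (1 / C 0)
    have h2 : HasDerivAt (fun s => (C s)⁻¹) ((A t * B t)⁻¹) t := by
      have h3 := (hC t ht).inv (ne_of_gt hCt)
      have e : (A t * B t)⁻¹ = -(-C t ^ 2 / (A t * B t)) / C t ^ 2 := by
        rw [neg_div, neg_div, neg_div, neg_neg, div_div, mul_comm (A t * B t), ← div_div, div_self (by positivity), one_div]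
      rw [e]
      exact h3
    exact h1.sub h2
  have monh : MonotoneOn h (Ici 0) := by
    apply monotoneOn_of_deriv_nonneg (convex_Ici 0)
      (fun t ht => (hderiv t ht).continuousAt.continuousWithinAt)
    · intro x hx
      rw [interior_Ici] at hx
      exact (hderiv x (Ioi_subset_Ici_self hx)).differentiableAt.differentiableWithinAt
    · intro x hx
      rw [interior_Ici] at hx
      rw [(hderiv x (Ioi_subset_Ici_self hx)).deriv]
      have hAx := hApos x (Ioi_subset_Ici_self hx)
      have hBx := hBpos x (Ioi_subset_Ici_self hx)
      have hle : A 0 * B 0 ≤ A x * B x :=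
        mul_le_mul (monA h0 (Ioi_subset_Ici_self hx) (le_of_lt hx))
          (monB h0 (Ioi_subset_Ici_self hx) (le_of_lt hx)) (le_of_lt hB0) (le_of_lt hAx)
      have := inv_anti₀ (by positivity) hle
      rw [one_div]
      linarith
  intro t ht
  have hCt := hCpos t ht
  have ht0 : (0:ℝ) ≤ t := ht
  have hmono := monh h0 ht ht0
  have hh0 : h 0 = 0 := by simp [hh]
  have hbound : (C t)⁻¹ ≤ 1 / C 0 + t / (A 0 * B 0) := by
    have : (0:ℝ) ≤ h t := hh0 ▸ hmono
    simp only [hh] at this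
    linarith
  have hP : (0:ℝ) < A 0 * B 0 + C 0 * t := by positivity
  rw [ge_iff_le, div_le_iff₀ hP]
  have key : 1 / C 0 + t / (A 0 * B 0) = (A 0 * B 0 + C 0 * t) / (C 0 * (A 0 * B 0)) := by
    field_simp
  rw [key, inv_eq_one_div, div_le_div_iff₀ hCt (by positivity)] at hbound
  nlinarith [hbound]
end

section
/- For positive solutions of A' = C/B + f, B' = C/A, C' = -C²/(AB) with 0 ≤ f(t) ≤ f₀, the integrated formula A(t) = A₀ + (1/Φ)∫₀^t C(s)² ds + ∫₀^t f(s) ds holds (where Φ = B₀C₀), and consequently A(t) ≤ A₀ + (C₀/B₀ + f₀) t for all t ≥ 0. -/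
open Set Filter MeasureTheory intervalIntegral

/-- For the Nil³ `(RH)_c` system with `0 ≤ f ≤ f₀`, the integrated formula
`A(t) = A₀ + (1/Φ)∫₀^t C² + ∫₀^t f` holds with `Φ = B₀C₀`, and consequently
`A(t) ≤ A₀ + (C₀/B₀ + f₀)t`. -/
theorem nil3_A_integral_formula_and_linear_bound
    (A B C f : ℝ → ℝ) (f₀ : ℝ)
    (hf : ∀ t ∈ Ici (0:ℝ), 0 ≤ f t ∧ f t ≤ f₀)
    (hfc : ContinuousOn f (Ici 0))
    (hApos : ∀ t ∈ Ici (0:ℝ), 0 < A t)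
    (hBpos : ∀ t ∈ Ici (0:ℝ), 0 < B t)
    (hCpos : ∀ t ∈ Ici (0:ℝ), 0 < C t)
    (hA : ∀ t ∈ Ici (0:ℝ), HasDerivAt A (C t / B t + f t) t)
    (hB : ∀ t ∈ Ici (0:ℝ), HasDerivAt B (C t / A t) t)
    (hC : ∀ t ∈ Ici (0:ℝ), HasDerivAt C (-(C t) ^ 2 / (A t * B t)) t) :
    (∀ t ∈ Ici (0:ℝ),
      A t = A 0 + (1 / (B 0 * C 0)) * (∫ s in (0:ℝ)..t, C s ^ 2)
              + ∫ s in (0:ℝ)..t, f s) ∧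
    ∀ t ∈ Ici (0:ℝ), A t ≤ A 0 + (C 0 / B 0 + f₀) * t := by
  have hBc : ContinuousOn B (Ici 0) := fun t ht => (hB t ht).continuousAt.continuousWithinAt
  have hCc : ContinuousOn C (Ici 0) := fun t ht => (hC t ht).continuousAt.continuousWithinAt
  -- Φ = B·C is constant
  have hΦ : ∀ t ∈ Ici (0:ℝ), B t * C t = B 0 * C 0 := by
    intro t ht
    have key := constant_of_has_deriv_right_zero (f := fun s => B s * C s) (a := 0) (b := t)
      (((hBc.mono (Icc_subset_Ici_self)).mul (hCc.mono (Icc_subset_Ici_self))))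
      (fun x hx => by
        have hx0 : x ∈ Ici (0:ℝ) := hx.1
        have hd := ((hB x hx0).mul (hC x hx0))
        have hA0 : A x ≠ 0 := (hApos x hx0).ne'
        have hB0 : B x ≠ 0 := (hBpos x hx0).ne'
        have : C x / A x * C x + B x * (-C x ^ 2 / (A x * B x)) = 0 := by
          field_simp
          ring
        rw [this] at hd
        exact hd.hasDerivWithinAt)
    exact key t ⟨ht, le_refl t⟩
  have hB00 : B 0 ≠ 0 := (hBpos 0 (mem_Ici.mpr le_rfl)).ne'
  have hC00 : C 0 ≠ 0 := (hCpos 0 (mem_Ici.mpr le_rfl)).ne'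
  -- the integral formula
  have formula : ∀ t ∈ Ici (0:ℝ),
      A t = A 0 + (1 / (B 0 * C 0)) * (∫ s in (0:ℝ)..t, C s ^ 2)
              + ∫ s in (0:ℝ)..t, f s := by
    intro t ht
    have ht0 : (0:ℝ) ≤ t := ht
    have huIcc : uIcc (0:ℝ) t = Icc 0 t := uIcc_of_le ht0
    have hsub : Icc (0:ℝ) t ⊆ Ici 0 := Icc_subset_Ici_self
    have hderiv : ∀ x ∈ uIcc (0:ℝ) t,
        HasDerivAt A (C x ^ 2 / (B 0 * C 0) + f x) x := by
      intro x hx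
      rw [huIcc] at hx
      have hx0 : x ∈ Ici (0:ℝ) := hsub hx
      have : C x / B x = C x ^ 2 / (B 0 * C 0) := by
        rw [← hΦ x hx0]
        have hBx : B x ≠ 0 := (hBpos x hx0).ne'
        have hCx : C x ≠ 0 := (hCpos x hx0).ne'
        field_simp
      have hd := hA x hx0
      rwa [this] at hd
    have hcont : ContinuousOn (fun s => C s ^ 2 / (B 0 * C 0) + f s) (uIcc (0:ℝ) t) := by
      rw [huIcc]
      exact (((hCc.mono hsub).pow 2).div_const _).add (hfc.mono hsub)
    have hint : IntervalIntegrable (fun s => C s ^ 2 / (B 0 * C 0) + f s) volume 0 t :=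
      hcont.intervalIntegrable
    have heq := intervalIntegral.integral_eq_sub_of_hasDerivAt hderiv hint
    have hint1 : IntervalIntegrable (fun s => C s ^ 2 / (B 0 * C 0)) volume 0 t := by
      apply ContinuousOn.intervalIntegrable
      rw [huIcc]
      exact ((hCc.mono hsub).pow 2).div_const _
    have hint2 : IntervalIntegrable f volume 0 t := by
      apply ContinuousOn.intervalIntegrable
      rw [huIcc]; exact hfc.mono hsub
    rw [intervalIntegral.integral_add hint1 hint2] at heq
    have : ∫ s in (0:ℝ)..t, C s ^ 2 / (B 0 * C 0)
        = (1 / (B 0 * C 0)) * ∫ s in (0:ℝ)..t, C s ^ 2 := by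
      rw [← intervalIntegral.integral_const_mul]
      congr 1; ext s; field_simp
    rw [this] at heq
    linarith [heq]
  refine ⟨formula, ?_⟩
  -- C is antitone
  have hCanti : AntitoneOn C (Ici 0) := by
    apply antitoneOn_of_deriv_nonpos (convex_Ici 0) hCc
    · intro x hx
      rw [interior_Ici] at hx
      exact (hC x (mem_Ici.mpr (le_of_lt (mem_Ioi.mp hx)))).differentiableAt.differentiableWithinAt
    · intro x hx
      rw [interior_Ici] at hx
      have hx0 : x ∈ Ici (0:ℝ) := mem_Ici.mpr (le_of_lt (mem_Ioi.mp hx))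
      rw [(hC x hx0).deriv]
      apply div_nonpos_of_nonpos_of_nonneg
      · simpa using sq_nonneg (C x)
      · exact le_of_lt (mul_pos (hApos x hx0) (hBpos x hx0))
  intro t ht
  have ht0 : (0:ℝ) ≤ t := ht
  have huIcc : uIcc (0:ℝ) t = Icc 0 t := uIcc_of_le ht0
  have hsub : Icc (0:ℝ) t ⊆ Ici 0 := Icc_subset_Ici_self
  have hintC2 : IntervalIntegrable (fun s => C s ^ 2) volume 0 t := by
    apply ContinuousOn.intervalIntegrable
    rw [huIcc]; exact (hCc.mono hsub).pow 2
  have hintf : IntervalIntegrable f volume 0 t := by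
    apply ContinuousOn.intervalIntegrable
    rw [huIcc]; exact hfc.mono hsub
  have hC2bound : ∫ s in (0:ℝ)..t, C s ^ 2 ≤ C 0 ^ 2 * t := by
    have := intervalIntegral.integral_mono_on ht0 hintC2
      (_root_.intervalIntegrable_const (c := C 0 ^ 2))
      (fun s hs => by
        have hs0 : s ∈ Ici (0:ℝ) := hsub hs
        have hle : C s ≤ C 0 := hCanti (mem_Ici.mpr le_rfl) hs0 hs.1
        have hpos : 0 ≤ C s := le_of_lt (hCpos s hs0)
        exact pow_le_pow_left₀ hpos hle 2)
    simpa [mul_comm] using this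
  have hfbound : ∫ s in (0:ℝ)..t, f s ≤ f₀ * t := by
    have := intervalIntegral.integral_mono_on ht0 hintf
      (_root_.intervalIntegrable_const (c := f₀))
      (fun s hs => (hf s (hsub hs)).2)
    simpa [mul_comm] using this
  have hΦpos : 0 < B 0 * C 0 := mul_pos (hBpos 0 (mem_Ici.mpr le_rfl)) (hCpos 0 (mem_Ici.mpr le_rfl))
  have h1 : (1 / (B 0 * C 0)) * (∫ s in (0:ℝ)..t, C s ^ 2)
      ≤ (1 / (B 0 * C 0)) * (C 0 ^ 2 * t) := by
    apply mul_le_mul_of_nonneg_left hC2bound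
    positivity
  have h2 : (1 / (B 0 * C 0)) * (C 0 ^ 2 * t) = (C 0 / B 0) * t := by
    field_simp
  have := formula t ht
  rw [this]
  have : A 0 + (1 / (B 0 * C 0)) * (∫ s in (0:ℝ)..t, C s ^ 2) + ∫ s in (0:ℝ)..t, f s
      ≤ A 0 + (C 0 / B 0) * t + f₀ * t := by
    have := h1.trans_eq h2
    linarith
  linarith [this]
end

section
/- For positive solutions of A' = C/B + f, B' = C/A, C' = -C²/(AB) with 0 ≤ f ≤ f₀, one has ∫₀^t ds/A(s) ≥ ∫₀^t ds/(A₀ + (C₀/B₀ + f₀)s), which tends to infinity as t → ∞; consequently B(t)² = B₀² + 2Φ ∫₀^t ds/A(s) → ∞ and C(t) = Φ/B(t) → 0 as t → ∞. -/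
open Set Filter MeasureTheory intervalIntegral

/-- For the Nil³ `(RH)_c` system with `0 ≤ f ≤ f₀`:
`∫₀^t ds/A(s) ≥ ∫₀^t ds/(A₀ + (C₀/B₀ + f₀)s)`, which tends to infinity;
`B(t)² = B₀² + 2Φ∫₀^t ds/A(s) → ∞`; and `C(t) = Φ/B(t) → 0` as `t → ∞`. -/
theorem nil3_B_blowup_C_decay
    (A B C f : ℝ → ℝ) (f₀ : ℝ)
    (hf : ∀ t ∈ Ici (0:ℝ), 0 ≤ f t ∧ f t ≤ f₀)
    (hApos : ∀ t ∈ Ici (0:ℝ), 0 < A t)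
    (hBpos : ∀ t ∈ Ici (0:ℝ), 0 < B t)
    (hCpos : ∀ t ∈ Ici (0:ℝ), 0 < C t)
    (hA : ∀ t ∈ Ici (0:ℝ), HasDerivAt A (C t / B t + f t) t)
    (hB : ∀ t ∈ Ici (0:ℝ), HasDerivAt B (C t / A t) t)
    (hC : ∀ t ∈ Ici (0:ℝ), HasDerivAt C (-(C t) ^ 2 / (A t * B t)) t) :
    (∀ t ∈ Ici (0:ℝ),
      (∫ s in (0:ℝ)..t, 1 / A s) ≥ ∫ s in (0:ℝ)..t, 1 / (A 0 + (C 0 / B 0 + f₀) * s)) ∧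
    Tendsto (fun t => ∫ s in (0:ℝ)..t, 1 / A s) atTop atTop ∧
    (∀ t ∈ Ici (0:ℝ),
      B t ^ 2 = B 0 ^ 2 + 2 * (B 0 * C 0) * ∫ s in (0:ℝ)..t, 1 / A s) ∧
    Tendsto B atTop atTop ∧
    (∀ t ∈ Ici (0:ℝ), C t = (B 0 * C 0) / B t) ∧
    Tendsto C atTop (nhds 0) := by
  have h0 : (0:ℝ) ∈ Ici (0:ℝ) := self_mem_Ici
  set Φ : ℝ := B 0 * C 0 with hΦdef
  set k : ℝ := C 0 / B 0 + f₀ with hkdef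
  have hA0 := hApos 0 h0
  have hB0 := hBpos 0 h0
  have hC0 := hCpos 0 h0
  have hΦpos : 0 < Φ := mul_pos hB0 hC0
  have hf0 : 0 ≤ f₀ := (hf 0 h0).1.trans (hf 0 h0).2
  have hk : 0 < k := add_pos_of_pos_of_nonneg (div_pos hC0 hB0) hf0
  -- continuity
  have hAc : ContinuousOn A (Ici 0) := fun t ht =>
    (hA t ht).continuousAt.continuousWithinAt
  have hBc : ContinuousOn B (Ici 0) := fun t ht =>
    (hB t ht).continuousAt.continuousWithinAt
  -- conservation of Φ = B*C
  have hcons : ∀ t ∈ Ici (0:ℝ), B t * C t = Φ := by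
    intro t ht
    have key : ∀ x ∈ uIcc (0:ℝ) t, HasDerivAt (fun s => B s * C s) ((fun _ => (0:ℝ)) x) x := by
      intro x hx
      rw [uIcc_of_le ht] at hx
      have hx' : x ∈ Ici (0:ℝ) := hx.1
      have hAx := hApos x hx'
      have hBx := hBpos x hx'
      have h : HasDerivAt (fun s => B s * C s) _ x := (hB x hx').mul (hC x hx')
      convert h using 1
      field_simp
      ring
    have hint : IntervalIntegrable (fun _ => (0:ℝ)) volume 0 t := intervalIntegrable_const
    have := intervalIntegral.integral_eq_sub_of_hasDerivAt key hint
    simp only [intervalIntegral.integral_zero] at this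
    have := this.symm
    linarith [this]
  -- B is monotone on Ici 0
  have hBmono : MonotoneOn B (Ici 0) := by
    apply monotoneOn_of_deriv_nonneg (convex_Ici 0) hBc
    · intro x hx
      rw [interior_Ici] at hx
      exact ((hB x (Ioi_subset_Ici_self hx)).differentiableAt).differentiableWithinAt
    · intro x hx
      rw [interior_Ici] at hx
      rw [(hB x (Ioi_subset_Ici_self hx)).deriv]
      exact div_nonneg (hCpos x (Ioi_subset_Ici_self hx)).le (hApos x (Ioi_subset_Ici_self hx)).le
  have hBge : ∀ t ∈ Ici (0:ℝ), B 0 ≤ B t := fun t ht => hBmono h0 ht ht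
  -- C = Φ / B
  have hCeq : ∀ t ∈ Ici (0:ℝ), C t = Φ / B t := by
    intro t ht
    have hBt := hBpos t ht
    rw [eq_div_iff hBt.ne']
    rw [mul_comm]
    exact hcons t ht
  -- C/B ≤ C0/B0
  have hCB : ∀ t ∈ Ici (0:ℝ), C t / B t ≤ C 0 / B 0 := by
    intro t ht
    have hBt := hBpos t ht
    have h1 : C t / B t = Φ / B t ^ 2 := by
      rw [hCeq t ht, div_div, ← sq]
    have h2 : C 0 / B 0 = Φ / B 0 ^ 2 := by
      rw [hΦdef, sq, mul_div_mul_left _ _ hB0.ne']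
    rw [h1, h2]
    have hBle := hBge t ht
    exact div_le_div_of_nonneg_left hΦpos.le (by positivity) (by nlinarith)
  -- A t ≤ A 0 + k t
  have hAle : ∀ t ∈ Ici (0:ℝ), A t ≤ A 0 + k * t := by
    intro t ht
    set g : ℝ → ℝ := fun s => A 0 + k * s - A s with hgdef
    have hgmono : MonotoneOn g (Ici 0) := by
      apply monotoneOn_of_deriv_nonneg (convex_Ici 0)
      · exact ((continuousOn_const.add (continuousOn_const.mul continuousOn_id)).sub hAc)
      · intro x hx
        rw [interior_Ici] at hx
        have hx' : x ∈ Ici (0:ℝ) := Ioi_subset_Ici_self hx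
        have hg : HasDerivAt g (k - (C x / B x + f x)) x := by
          have h1 : HasDerivAt (fun s : ℝ => A 0 + k * s) k x := by
            simpa using ((hasDerivAt_id x).const_mul k).const_add (A 0)
          exact h1.sub (hA x hx')
        exact hg.differentiableAt.differentiableWithinAt
      · intro x hx
        rw [interior_Ici] at hx
        have hx' : x ∈ Ici (0:ℝ) := Ioi_subset_Ici_self hx
        have hg : HasDerivAt g (k - (C x / B x + f x)) x := by
          have h1 : HasDerivAt (fun s : ℝ => A 0 + k * s) k x := by
            simpa using ((hasDerivAt_id x).const_mul k).const_add (A 0)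
          exact h1.sub (hA x hx')
        rw [hg.deriv]
        have := hCB x hx'
        have := (hf x hx').2
        rw [hkdef]
        linarith
    have := hgmono h0 ht ht
    simp only [hgdef, mul_zero, add_zero] at this
    linarith
  -- interval integrability of 1/A
  have hIntA : ∀ t : ℝ, 0 ≤ t → IntervalIntegrable (fun s => 1 / A s) volume 0 t := by
    intro t ht
    apply ContinuousOn.intervalIntegrable
    rw [uIcc_of_le ht]
    apply ContinuousOn.div continuousOn_const (hAc.mono (Icc_subset_Ici_self))
    intro x hx
    exact (hApos x hx.1).ne'
  -- interval integrability of lower comparison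
  have hLcont : ∀ t : ℝ, 0 ≤ t → ContinuousOn (fun s => 1 / (A 0 + k * s)) (Icc 0 t) := by
    intro t ht
    apply ContinuousOn.div continuousOn_const
      (continuousOn_const.add (continuousOn_const.mul continuousOn_id))
    intro x hx
    have : 0 < A 0 + k * x := by
      have : 0 ≤ k * x := mul_nonneg hk.le hx.1
      linarith
    exact this.ne'
  have hIntL : ∀ t : ℝ, 0 ≤ t → IntervalIntegrable (fun s => 1 / (A 0 + k * s)) volume 0 t := by
    intro t ht
    apply ContinuousOn.intervalIntegrable
    rw [uIcc_of_le ht]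
    exact hLcont t ht
  -- Part 1: integral comparison
  have part1 : ∀ t ∈ Ici (0:ℝ),
      (∫ s in (0:ℝ)..t, 1 / A s) ≥ ∫ s in (0:ℝ)..t, 1 / (A 0 + k * s) := by
    intro t ht
    apply intervalIntegral.integral_mono_on ht (hIntL t ht) (hIntA t ht)
    intro x hx
    have hx' : x ∈ Ici (0:ℝ) := hx.1
    have hAx := hApos x hx'
    exact one_div_le_one_div_of_le hAx (hAle x hx')
  -- formula for the lower integral
  have hJ : ∀ t : ℝ, 0 ≤ t → (∫ s in (0:ℝ)..t, 1 / (A 0 + k * s))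
      = (1/k) * Real.log (A 0 + k * t) - (1/k) * Real.log (A 0 + k * 0) := by
    intro t ht
    apply intervalIntegral.integral_eq_sub_of_hasDerivAt
    · intro x hx
      rw [uIcc_of_le ht] at hx
      have hpos : 0 < A 0 + k * x := by
        have : 0 ≤ k * x := mul_nonneg hk.le hx.1
        linarith
      have h1 : HasDerivAt (fun s : ℝ => A 0 + k * s) k x := by
        simpa using ((hasDerivAt_id x).const_mul k).const_add (A 0)
      have h2 := (Real.hasDerivAt_log hpos.ne').comp x h1
      have h3 : HasDerivAt (fun t => 1/k * Real.log (A 0 + k*t)) _ x := h2.const_mul (1/k)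
      refine h3.congr_deriv ?_
      field_simp
    · exact hIntL t ht
  -- Tendsto of the lower bound
  have haff : Tendsto (fun t : ℝ => A 0 + k * t) atTop atTop := by
    apply tendsto_atTop_add_const_left
    exact Tendsto.const_mul_atTop hk tendsto_id
  have hJtend : Tendsto (fun t : ℝ =>
      (1/k) * Real.log (A 0 + k * t) - (1/k) * Real.log (A 0 + k * 0)) atTop atTop := by
    apply tendsto_atTop_add_const_right
    exact Tendsto.const_mul_atTop (by positivity) (Real.tendsto_log_atTop.comp haff)
  -- Part 2: Tendsto of ∫ 1/A
  have part2 : Tendsto (fun t => ∫ s in (0:ℝ)..t, 1 / A s) atTop atTop := by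
    apply tendsto_atTop_mono' atTop _ hJtend
    filter_upwards [eventually_ge_atTop (0:ℝ)] with t ht
    rw [← hJ t ht]
    exact part1 t ht
  -- Part 3: B² formula
  have part3 : ∀ t ∈ Ici (0:ℝ),
      B t ^ 2 = B 0 ^ 2 + 2 * Φ * ∫ s in (0:ℝ)..t, 1 / A s := by
    intro t ht
    have key : ∀ x ∈ uIcc (0:ℝ) t,
        HasDerivAt (fun s => B s ^ 2) ((fun s => 2 * Φ * (1 / A s)) x) x := by
      intro x hx
      rw [uIcc_of_le ht] at hx
      have hx' : x ∈ Ici (0:ℝ) := hx.1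
      have hAx := hApos x hx'
      have h : HasDerivAt (fun s => B s ^ 2) _ x := (hB x hx').pow 2
      convert h using 1
      simp only [Nat.sub_self, pow_one, Nat.cast_ofNat]
      rw [← hcons x hx']
      field_simp
      ring
    have hint : IntervalIntegrable (fun s => 2 * Φ * (1 / A s)) volume 0 t :=
      (hIntA t ht).const_mul (2 * Φ)
    have heq := intervalIntegral.integral_eq_sub_of_hasDerivAt key hint
    rw [intervalIntegral.integral_const_mul] at heq
    linarith
  -- Part 4: B → ∞
  have part4 : Tendsto B atTop atTop := by
    rw [tendsto_atTop]
    intro b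
    have hsq : Tendsto (fun t => B 0 ^ 2 + 2 * Φ * ∫ s in (0:ℝ)..t, 1 / A s) atTop atTop := by
      apply tendsto_atTop_add_const_left
      exact Tendsto.const_mul_atTop (by positivity) part2
    filter_upwards [eventually_ge_atTop (0:ℝ), hsq.eventually_ge_atTop (b^2)] with t ht hsqt
    have hBt := hBpos t ht
    have hb2 : b ^ 2 ≤ B t ^ 2 := by rw [part3 t ht]; exact hsqt
    calc b ≤ |b| := le_abs_self b
    _ = Real.sqrt (b ^ 2) := (Real.sqrt_sq_eq_abs b).symm
    _ ≤ Real.sqrt (B t ^ 2) := Real.sqrt_le_sqrt hb2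
    _ = B t := by rw [Real.sqrt_sq hBt.le]
  -- Part 6: C → 0
  have part6 : Tendsto C atTop (nhds 0) := by
    have h1 : Tendsto (fun t => Φ / B t) atTop (nhds 0) :=
      Tendsto.div_atTop tendsto_const_nhds part4
    apply h1.congr'
    filter_upwards [eventually_ge_atTop (0:ℝ)] with t ht
    exact (hCeq t ht).symm
  exact ⟨part1, part2, part3, part4, hCeq, part6⟩
end

section
/- For positive solutions of A' = C/B + f₀, B' = C/A, C' = -C²/(AB) with constant f₀ > 0, A(t)/(f₀ t) → 1 as t → ∞; i.e., A(t) ~ f₀ t. -/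
open Set Filter

/-- Monotonicity on `Ici a` from a nonnegative derivative. -/
lemma monoOn_of_hasDerivAt_nonneg {f f' : ℝ → ℝ} {a : ℝ}
    (hf : ∀ t ∈ Ici a, HasDerivAt f (f' t) t)
    (h0 : ∀ t ∈ Ici a, 0 ≤ f' t) : MonotoneOn f (Ici a) := by
  apply monotoneOn_of_deriv_nonneg (convex_Ici a)
    (fun t ht => (hf t ht).continuousAt.continuousWithinAt)
  · intro x hx
    rw [interior_Ici] at hx
    exact ((hf x (mem_Ici.mpr (le_of_lt hx))).differentiableAt).differentiableWithinAt
  · intro x hx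
    rw [interior_Ici] at hx
    rw [(hf x (mem_Ici.mpr (le_of_lt hx))).deriv]
    exact h0 x (mem_Ici.mpr (le_of_lt hx))

/-- For the Nil³ `(RH)_c` system with constant coupling `f₀ > 0`,
`A(t)/(f₀t) → 1` as `t → ∞`; i.e., `A(t) ~ f₀t`. -/
theorem nil3_constant_coupling_A_asymptotics
    (A B C : ℝ → ℝ) (f₀ : ℝ) (hf₀ : 0 < f₀)
    (hApos : ∀ t ∈ Ici (0:ℝ), 0 < A t)
    (hBpos : ∀ t ∈ Ici (0:ℝ), 0 < B t)
    (hCpos : ∀ t ∈ Ici (0:ℝ), 0 < C t)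
    (hA : ∀ t ∈ Ici (0:ℝ), HasDerivAt A (C t / B t + f₀) t)
    (hB : ∀ t ∈ Ici (0:ℝ), HasDerivAt B (C t / A t) t)
    (hC : ∀ t ∈ Ici (0:ℝ), HasDerivAt C (-(C t) ^ 2 / (A t * B t)) t) :
    Tendsto (fun t => A t / (f₀ * t)) atTop (nhds 1) := by
  have h0mem : (0:ℝ) ∈ Ici (0:ℝ) := self_mem_Ici
  set h : ℝ → ℝ := fun t => B t / C t with hh_def
  -- derivative of h is 2 / A
  have hh : ∀ t ∈ Ici (0:ℝ), HasDerivAt h (2 / A t) t := by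
    intro t ht
    have hd := (hB t ht).div (hC t ht) (hCpos t ht).ne'
    refine hd.congr_deriv ?_
    have hA0 := (hApos t ht).ne'
    have hB0 := (hBpos t ht).ne'
    have hC0 := (hCpos t ht).ne'
    field_simp
    ring
  have hhpos : ∀ t ∈ Ici (0:ℝ), 0 < h t :=
    fun t ht => div_pos (hBpos t ht) (hCpos t ht)
  -- h is monotone on Ici 0
  have hhmono : MonotoneOn h (Ici 0) :=
    monoOn_of_hasDerivAt_nonneg hh
      (fun t ht => le_of_lt (div_pos two_pos (hApos t ht)))
  -- C/B is bounded by its initial value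
  set M : ℝ := C 0 / B 0 + f₀ with hM_def
  have hCB : ∀ t ∈ Ici (0:ℝ), C t / B t ≤ C 0 / B 0 := by
    intro t ht
    have h1 : h 0 ≤ h t := hhmono h0mem ht ht
    have h2 : (h t)⁻¹ ≤ (h 0)⁻¹ :=
      inv_anti₀ (hhpos 0 h0mem) h1
    have e1 : (h t)⁻¹ = C t / B t := by
      rw [hh_def]; simp [inv_div]
    have e2 : (h 0)⁻¹ = C 0 / B 0 := by
      rw [hh_def]; simp [inv_div]
    rwa [e1, e2] at h2
  have hMpos : 0 < M := by
    have := div_pos (hCpos 0 h0mem) (hBpos 0 h0mem)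
    positivity
  -- lower bound: A t ≥ A 0 + f₀ * t
  have hlow : ∀ t ∈ Ici (0:ℝ), A 0 + f₀ * t ≤ A t := by
    have hm : MonotoneOn (fun t => A t - f₀ * t) (Ici 0) := by
      apply monoOn_of_hasDerivAt_nonneg (f' := fun t => C t / B t)
      · intro t ht
        have := (hA t ht).sub ((hasDerivAt_id t).const_mul f₀)
        exact this.congr_deriv (by ring)
      · intro t ht
        exact le_of_lt (div_pos (hCpos t ht) (hBpos t ht))
    intro t ht
    have := hm h0mem ht ht
    simp only [mul_zero, sub_zero] at this
    linarith
  -- upper bound: A t ≤ A 0 + M * t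
  have hup : ∀ t ∈ Ici (0:ℝ), A t ≤ A 0 + M * t := by
    have hm : MonotoneOn (fun t => A 0 + M * t - A t) (Ici 0) := by
      apply monoOn_of_hasDerivAt_nonneg (f' := fun t => M - (C t / B t + f₀))
      · intro t ht
        have := (((hasDerivAt_id t).const_mul M).const_add (A 0)).sub (hA t ht)
        exact this.congr_deriv (by ring)
      · intro t ht
        have := hCB t ht
        simp only [hM_def]; linarith
    intro t ht
    have := hm h0mem ht ht
    simp only [mul_zero, add_zero] at this
    linarith
  -- h t ≥ h 0 + (2/M) * (log (A 0 + M t) - log (A 0))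
  have hA0pos : 0 < A 0 := hApos 0 h0mem
  have hlog : ∀ t ∈ Ici (0:ℝ),
      h 0 + (2 / M) * (Real.log (A 0 + M * t) - Real.log (A 0)) ≤ h t := by
    have hm : MonotoneOn (fun t => h t - (2 / M) * Real.log (A 0 + M * t)) (Ici 0) := by
      apply monoOn_of_hasDerivAt_nonneg
        (f' := fun t => 2 / A t - (2 / M) * (M / (A 0 + M * t)))
      · intro t ht
        have hpos : 0 < A 0 + M * t := by
          have : 0 ≤ M * t := mul_nonneg hMpos.le ht
          linarith
        have hln : HasDerivAt (fun t => Real.log (A 0 + M * t)) (M / (A 0 + M * t)) t := by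
          have := (((hasDerivAt_id t).const_mul M).const_add (A 0)).log hpos.ne'
          simpa using this
        exact (hh t ht).sub (hln.const_mul (2 / M))
      · intro t ht
        have hAt : 0 < A t := hApos t ht
        have hle : A t ≤ A 0 + M * t := hup t ht
        have hpos : 0 < A 0 + M * t := lt_of_lt_of_le hAt hle
        have h1 : 2 / (A 0 + M * t) ≤ 2 / A t :=
          div_le_div_of_nonneg_left (by norm_num) hAt hle
        have h2 : (2 / M) * (M / (A 0 + M * t)) = 2 / (A 0 + M * t) := by
          field_simp
        rw [h2]; linarith
    intro t ht
    have := hm h0mem ht ht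
    simp only [mul_zero, add_zero] at this
    linarith
  -- hence h → ∞
  have hhtop : Tendsto h atTop atTop := by
    apply tendsto_atTop_mono' atTop
      (show ∀ᶠ t in atTop,
        h 0 + (2 / M) * (Real.log (A 0 + M * t) - Real.log (A 0)) ≤ h t from
        (eventually_ge_atTop 0).mono fun t ht => hlog t ht)
    have h1 : Tendsto (fun t : ℝ => A 0 + M * t) atTop atTop :=
      tendsto_atTop_add_const_left _ _ (tendsto_id.const_mul_atTop hMpos)
    have h2 : Tendsto (fun t : ℝ => Real.log (A 0 + M * t)) atTop atTop :=
      Real.tendsto_log_atTop.comp h1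
    have h3 : Tendsto (fun t : ℝ => Real.log (A 0 + M * t) - Real.log (A 0)) atTop atTop :=
      tendsto_atTop_add_const_right _ _ h2
    have h4 : Tendsto (fun t : ℝ => (2 / M) * (Real.log (A 0 + M * t) - Real.log (A 0)))
        atTop atTop := h3.const_mul_atTop (by positivity)
    exact tendsto_atTop_add_const_left _ _ h4
  -- main ε-argument
  rw [Metric.tendsto_atTop]
  intro δ hδ
  set ε : ℝ := f₀ * δ / 2 with hε_def
  have hεpos : 0 < ε := by positivity
  -- find T ≥ 0 with C t / B t ≤ ε for all t ≥ T
  obtain ⟨T₀, hT₀⟩ := (hhtop.eventually_ge_atTop ε⁻¹).exists_forall_of_atTop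
  set T : ℝ := max T₀ 0 with hT_def
  have hT0 : (0:ℝ) ≤ T := le_max_right _ _
  have hTmem : T ∈ Ici (0:ℝ) := hT0
  have hsmall : ∀ t ∈ Ici T, C t / B t ≤ ε := by
    intro t ht
    have htT : T ≤ t := ht
    have ht0 : (0:ℝ) ≤ t := le_trans hT0 htT
    have h1 : ε⁻¹ ≤ h t := hT₀ t (le_trans (le_max_left _ _) htT)
    have h2 : (h t)⁻¹ ≤ ε := by
      rw [inv_le_comm₀ hεpos (hhpos t ht0)] at h1
      · exact h1
    have e1 : (h t)⁻¹ = C t / B t := by rw [hh_def]; simp [inv_div]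
    rwa [e1] at h2
  -- on [T, ∞), A t ≤ A T + (f₀ + ε) * (t - T)
  have hupT : ∀ t ∈ Ici T, A t ≤ A T + (f₀ + ε) * (t - T) := by
    have hm : MonotoneOn (fun t => A T + (f₀ + ε) * (t - T) - A t) (Ici T) := by
      apply monoOn_of_hasDerivAt_nonneg (f' := fun t => (f₀ + ε) - (C t / B t + f₀))
      · intro t ht
        have ht0 : t ∈ Ici (0:ℝ) := le_trans hT0 ht
        have : HasDerivAt (fun t => A T + (f₀ + ε) * (t - T)) (f₀ + ε) t := by
          have := (((hasDerivAt_id t).sub_const T).const_mul (f₀ + ε)).const_add (A T)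
          simpa using this
        exact this.sub (hA t ht0)
      · intro t ht
        have := hsmall t ht
        linarith
    intro t ht
    have := hm (self_mem_Ici) ht ht
    simp only [sub_self, mul_zero, add_zero] at this
    linarith
  -- choose the final threshold
  refine ⟨max (max T 1) (2 * (A T + 1) / (f₀ * δ)), fun t ht => ?_⟩
  have htT : T ≤ t := le_trans (le_trans (le_max_left _ _) (le_max_left _ _)) ht
  have ht1 : (1:ℝ) ≤ t := le_trans (le_trans (le_max_right _ _) (le_max_left _ _)) ht
  have htpos : (0:ℝ) < t := lt_of_lt_of_le one_pos ht1
  have ht0 : t ∈ Ici (0:ℝ) := htpos.le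
  have hft : 0 < f₀ * t := mul_pos hf₀ htpos
  have hATpos : 0 < A T := hApos T hTmem
  -- lower bound on the ratio
  have hlb : 1 ≤ A t / (f₀ * t) := by
    have := hlow t ht0
    rw [le_div_iff₀ hft]
    nlinarith [hA0pos]
  -- upper bound on the ratio
  have hub : A t / (f₀ * t) - 1 < δ := by
    have h1 : A t ≤ A T + (f₀ + ε) * (t - T) := hupT t htT
    have h2 : A t ≤ A T + (f₀ + ε) * t := by
      nlinarith [hεpos, hT0]
    have h3 : 2 * (A T + 1) / (f₀ * δ) ≤ t :=
      le_trans (le_max_right _ _) ht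
    have h4 : 2 * (A T + 1) ≤ f₀ * δ * t := by
      rw [div_le_iff₀ (by positivity)] at h3
      linarith [h3]
    have h5 : A t / (f₀ * t) ≤ (A T + (f₀ + ε) * t) / (f₀ * t) := by gcongr
    have h6 : (A T + (f₀ + ε) * t) / (f₀ * t) = A T / (f₀ * t) + 1 + δ / 2 := by
      rw [hε_def]
      field_simp
      ring
    have h7 : A T / (f₀ * t) < δ / 2 := by
      rw [div_lt_iff₀ hft]
      nlinarith
    calc A t / (f₀ * t) - 1 ≤ (A T + (f₀ + ε) * t) / (f₀ * t) - 1 := by linarith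
      _ = A T / (f₀ * t) + δ / 2 := by rw [h6]; ring
      _ < δ := by linarith
  rw [Real.dist_eq, abs_sub_lt_iff]
  constructor <;> linarith
end

section
/- For positive solutions of A' = C/B + f₀, B' = C/A, C' = -C²/(AB) with constant f₀ > 0, the asymptotics B(t)² ~ (2Φ/f₀) log t hold as t → ∞, where Φ = B₀C₀; equivalently B(t)²/log t → 2B₀C₀/f₀. -/
open Set Filter

lemma monoAux {f f' : ℝ → ℝ} {a : ℝ} (hd : ∀ t ∈ Ici a, HasDerivAt f (f' t) t)
    (h0 : ∀ t ∈ Ici a, 0 ≤ f' t) : MonotoneOn f (Ici a) := by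
  apply monotoneOn_of_deriv_nonneg (convex_Ici a)
  · exact fun t ht => (hd t ht).continuousAt.continuousWithinAt
  · intro t ht
    rw [interior_Ici] at ht
    exact ((hd t (mem_Ici.2 (mem_Ioi.1 ht).le)).differentiableAt).differentiableWithinAt
  · intro t ht
    rw [interior_Ici] at ht
    rw [(hd t (mem_Ici.2 (mem_Ioi.1 ht).le)).deriv]
    exact h0 t (mem_Ici.2 (mem_Ioi.1 ht).le)

lemma constAux {f f' : ℝ → ℝ} {a : ℝ} (hd : ∀ t ∈ Ici a, HasDerivAt f (f' t) t)
    (h0 : ∀ t ∈ Ici a, f' t = 0) : ∀ t ∈ Ici a, f t = f a := by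
  intro t ht
  have h1 := monoAux hd (fun t ht => (h0 t ht).ge)
  have h2 := monoAux (f' := fun t => -(f' t)) (fun t ht => (hd t ht).neg)
    (fun t ht => by simp [h0 t ht])
  exact le_antisymm (by simpa using h2 self_mem_Ici ht ht) (h1 self_mem_Ici ht ht)

lemma aux_tendsto_div (F G : ℝ → ℝ) (L : ℝ) (hG : Tendsto G atTop atTop)
    (h : ∀ ε > 0, ∃ c C : ℝ, ∀ᶠ t in atTop, (L - ε) * G t + c ≤ F t ∧ F t ≤ (L + ε) * G t + C) :
    Tendsto (fun t => F t / G t) atTop (nhds L) := by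
  rw [Metric.tendsto_nhds]
  intro ε hε
  obtain ⟨c, C, hcC⟩ := h (ε/2) (by linarith)
  have hG1 : ∀ᶠ t in atTop, max 1 (max (|c| / (ε/2)) (|C| / (ε/2))) < G t :=
    hG.eventually_gt_atTop _
  filter_upwards [hcC, hG1] with t ht hg
  obtain ⟨h1, h2⟩ := ht
  have hGpos : 0 < G t := lt_of_lt_of_le zero_lt_one ((le_max_left _ _).trans hg.le)
  have hc' : |c| < ε/2 * G t := by
    have := ((le_max_left _ _).trans (le_max_right 1 _)).trans_lt hg
    rwa [div_lt_iff₀ (by linarith : (0:ℝ) < ε/2), mul_comm] at this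
  have hC' : |C| < ε/2 * G t := by
    have := ((le_max_right _ _).trans (le_max_right 1 _)).trans_lt hg
    rwa [div_lt_iff₀ (by linarith : (0:ℝ) < ε/2), mul_comm] at this
  have up : F t < (L + ε) * G t := by nlinarith [le_abs_self C, hC']
  have lo : (L - ε) * G t < F t := by nlinarith [neg_abs_le c, hc']
  rw [Real.dist_eq, abs_sub_lt_iff]
  constructor
  · have := (div_lt_iff₀ hGpos).2 (by nlinarith : F t < (ε + L) * G t)
    linarith
  · have := (lt_div_iff₀ hGpos).2 lo
    linarith

/-- For the Nil³ `(RH)_c` system with constant coupling `f₀ > 0`,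
`B(t)² ~ (2Φ/f₀) log t` as `t → ∞`, where `Φ = B₀C₀`. -/
theorem nil3_constant_coupling_B_asymptotics
    (A B C : ℝ → ℝ) (f₀ : ℝ) (hf₀ : 0 < f₀)
    (hApos : ∀ t ∈ Ici (0:ℝ), 0 < A t)
    (hBpos : ∀ t ∈ Ici (0:ℝ), 0 < B t)
    (hCpos : ∀ t ∈ Ici (0:ℝ), 0 < C t)
    (hA : ∀ t ∈ Ici (0:ℝ), HasDerivAt A (C t / B t + f₀) t)
    (hB : ∀ t ∈ Ici (0:ℝ), HasDerivAt B (C t / A t) t)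
    (hC : ∀ t ∈ Ici (0:ℝ), HasDerivAt C (-(C t) ^ 2 / (A t * B t)) t) :
    Tendsto (fun t => B t ^ 2 / Real.log t) atTop (nhds (2 * (B 0 * C 0) / f₀)) := by
  set Φ := B 0 * C 0 with hΦdef
  have hA0 : 0 < A 0 := hApos 0 self_mem_Ici
  have hB0 : 0 < B 0 := hBpos 0 self_mem_Ici
  have hC0 : 0 < C 0 := hCpos 0 self_mem_Ici
  have hΦ : 0 < Φ := mul_pos hB0 hC0
  -- conservation of B*C
  have hcons : ∀ t ∈ Ici (0:ℝ), B t * C t = Φ := by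
    intro t ht
    have h1 : ∀ s ∈ Ici (0:ℝ), HasDerivAt (fun u => B u * C u)
        ((fun _ => (0:ℝ)) s) s := by
      intro s hs
      have h := (hB s hs).mul (hC s hs)
      refine h.congr_deriv ?_
      have hAne := (hApos s hs).ne'
      have hBne := (hBpos s hs).ne'
      field_simp
      ring
    exact constAux h1 (fun s _ => rfl) t ht
  -- B is monotone
  have hBmono : MonotoneOn B (Ici 0) :=
    monoAux hB (fun t ht => div_nonneg (hCpos t ht).le (hApos t ht).le)
  have hBge : ∀ t ∈ Ici (0:ℝ), B 0 ≤ B t := fun t ht => hBmono self_mem_Ici ht ht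
  have hCB : ∀ t ∈ Ici (0:ℝ), C t / B t = Φ / B t ^ 2 := by
    intro t ht
    have hBne := (hBpos t ht).ne'
    rw [div_eq_div_iff hBne (pow_ne_zero 2 hBne)]
    linear_combination (B t) * (hcons t ht)
  set K := f₀ + Φ / B 0 ^ 2 with hKdef
  have hK : 0 < K := by positivity
  -- upper bound on A
  have hAup : ∀ t ∈ Ici (0:ℝ), A t ≤ A 0 + K * t := by
    intro t ht
    have hd : ∀ s ∈ Ici (0:ℝ), HasDerivAt (fun u => A 0 + K * u - A u)
        ((fun u => K - (C u / B u + f₀)) s) s := by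
      intro s hs
      exact (((hasDerivAt_id s).const_mul K).const_add (A 0)).sub (hA s hs) |>.congr_deriv
        (by ring)
    have hm := monoAux hd (fun s hs => by
      have h1 : Φ / B s ^ 2 ≤ Φ / B 0 ^ 2 :=
        div_le_div_of_nonneg_left hΦ.le (by positivity)
          (pow_le_pow_left₀ hB0.le (hBge s hs) 2)
      have h2 := hCB s hs
      simp only [hKdef]
      linarith [h2 ▸ h1])
    have h5 : A 0 + K * 0 - A 0 ≤ A 0 + K * t - A t := hm self_mem_Ici ht ht
    linarith
  -- derivative of B²
  have hB2deriv : ∀ t ∈ Ici (0:ℝ), HasDerivAt (fun u => B u ^ 2) (2 * Φ / A t) t := by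
    intro t ht
    have h := (hB t ht).pow 2
    refine h.congr_deriv ?_
    have hAne := (hApos t ht).ne'
    rw [← hcons t ht]
    push_cast
    field_simp
  -- lower bound on B², giving B² → ∞
  have hlow : ∀ t ∈ Ici (0:ℝ),
      B 0 ^ 2 + (2 * Φ / K) * (Real.log (A 0 + K * t) - Real.log (A 0)) ≤ B t ^ 2 := by
    intro t ht
    have hd : ∀ s ∈ Ici (0:ℝ), HasDerivAt
        (fun u => B u ^ 2 - (2 * Φ / K) * Real.log (A 0 + K * u))
        ((fun u => 2 * Φ / A u - (2 * Φ / K) * (K / (A 0 + K * u))) s) s := by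
      intro s hs
      have hpos : (0:ℝ) < A 0 + K * s := by
        have : (0:ℝ) ≤ K * s := mul_nonneg hK.le hs
        linarith
      have hlog : HasDerivAt (fun u => Real.log (A 0 + K * u)) (K / (A 0 + K * s)) s := by
        have hlin : HasDerivAt (fun u : ℝ => A 0 + K * u) K s := by
          simpa using ((hasDerivAt_id s).const_mul K).const_add (A 0)
        simpa [div_eq_mul_inv] using hlin.log hpos.ne'
      exact (hB2deriv s hs).sub (hlog.const_mul (2 * Φ / K))
    have hm := monoAux hd (fun s hs => by
      have hpos : (0:ℝ) < A 0 + K * s := by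
        have : (0:ℝ) ≤ K * s := mul_nonneg hK.le hs
        linarith
      have h1 : 2 * Φ / (A 0 + K * s) ≤ 2 * Φ / A s :=
        div_le_div_of_nonneg_left (by positivity) (hApos s hs) (hAup s hs)
      have h2 : (2 * Φ / K) * (K / (A 0 + K * s)) = 2 * Φ / (A 0 + K * s) := by
        field_simp
      linarith)
    have h5 : B 0 ^ 2 - (2 * Φ / K) * Real.log (A 0 + K * 0) ≤
        B t ^ 2 - (2 * Φ / K) * Real.log (A 0 + K * t) := hm self_mem_Ici ht ht
    norm_num at h5
    linarith
  have hB2top : Tendsto (fun t => B t ^ 2) atTop atTop := by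
    have hlb : Tendsto (fun t => B 0 ^ 2 + (2 * Φ / K) *
        (Real.log (A 0 + K * t) - Real.log (A 0))) atTop atTop := by
      apply tendsto_atTop_add_const_left
      apply Tendsto.const_mul_atTop (div_pos (by linarith) hK)
      apply tendsto_atTop_add_const_right
      exact Real.tendsto_log_atTop.comp
        (tendsto_atTop_add_const_left _ _ (tendsto_id.const_mul_atTop hK))
    apply tendsto_atTop_mono' atTop _ hlb
    filter_upwards [eventually_ge_atTop (0:ℝ)] with t ht
    exact hlow t ht
  -- A t / t → f₀
  have hAt : Tendsto (fun t => A t / t) atTop (nhds f₀) := by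
    apply aux_tendsto_div A (fun t => t) f₀ tendsto_id
    intro ε hε
    have hev : ∀ᶠ t in atTop, Φ / ε ≤ B t ^ 2 ∧ (0:ℝ) ≤ t :=
      (hB2top.eventually_ge_atTop (Φ / ε)).and (eventually_ge_atTop 0)
    rw [eventually_atTop] at hev
    obtain ⟨T, hT⟩ := hev
    have hT0 : (0:ℝ) ≤ T := (hT T le_rfl).2
    refine ⟨A T - f₀ * T, A T - (f₀ + ε) * T, ?_⟩
    filter_upwards [eventually_ge_atTop T] with t ht
    have ht0 : t ∈ Ici (0:ℝ) := le_trans hT0 ht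
    constructor
    · -- lower bound: A t ≥ f₀ t + (A T - f₀ T) ≥ (f₀ - ε) t + ...
      have hd : ∀ s ∈ Ici T, HasDerivAt (fun u => A u - f₀ * u)
          ((fun u => C u / B u) s) s := by
        intro s hs
        have hs0 : s ∈ Ici (0:ℝ) := le_trans hT0 hs
        exact (hA s hs0).sub ((hasDerivAt_id s).const_mul f₀) |>.congr_deriv (by ring)
      have hm := monoAux hd (fun s hs =>
        div_nonneg (hCpos s (le_trans hT0 hs)).le (hBpos s (le_trans hT0 hs)).le)
      have h5 : A T - f₀ * T ≤ A t - f₀ * t := hm self_mem_Ici ht ht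
      nlinarith [mul_nonneg hε.le (le_trans hT0 ht)]
    · -- upper bound
      have hd : ∀ s ∈ Ici T, HasDerivAt (fun u => A T + (f₀ + ε) * (u - T) - A u)
          ((fun u => (f₀ + ε) - (C u / B u + f₀)) s) s := by
        intro s hs
        have hs0 : s ∈ Ici (0:ℝ) := le_trans hT0 hs
        exact ((((hasDerivAt_id s).sub_const T).const_mul (f₀ + ε)).const_add (A T)).sub
          (hA s hs0) |>.congr_deriv (by ring)
      have hm := monoAux hd (fun s hs => by
        have hs0 : s ∈ Ici (0:ℝ) := le_trans hT0 hs
        have hB2 : Φ / ε ≤ B s ^ 2 := (hT s hs).1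
        have h2 : C s / B s = Φ / B s ^ 2 := hCB s hs0
        have h3 : Φ / B s ^ 2 ≤ ε := by
          rw [div_le_iff₀ (pow_pos (hBpos s hs0) 2)]
          rw [div_le_iff₀ hε] at hB2
          linarith
        linarith [h2 ▸ h3])
      have h5 : A T + (f₀ + ε) * (T - T) - A T ≤ A T + (f₀ + ε) * (t - T) - A t :=
        hm self_mem_Ici ht ht
      nlinarith
  -- the ratio 2Φ t / A t tends to 2Φ/f₀
  have hratio : Tendsto (fun t => 2 * Φ * t / A t) atTop (nhds (2 * Φ / f₀)) := by
    have h1 : Tendsto (fun t => 2 * Φ * (A t / t)⁻¹) atTop (nhds (2 * Φ * f₀⁻¹)) :=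
      (hAt.inv₀ hf₀.ne').const_mul (2 * Φ)
    rw [div_eq_mul_inv (2 * Φ) f₀]
    apply h1.congr'
    filter_upwards [eventually_gt_atTop (0:ℝ)] with t ht
    have hAne := (hApos t ht.le).ne'
    rw [inv_div, mul_div_assoc]
  -- final
  apply aux_tendsto_div (fun t => B t ^ 2) Real.log (2 * Φ / f₀) Real.tendsto_log_atTop
  intro ε hε
  have hev : ∀ᶠ t in atTop, |2 * Φ * t / A t - 2 * Φ / f₀| < ε ∧ (1:ℝ) ≤ t := by
    refine (?_ : ∀ᶠ t in atTop, |2 * Φ * t / A t - 2 * Φ / f₀| < ε).and (eventually_ge_atTop 1)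
    have := Metric.tendsto_nhds.1 hratio ε hε
    simpa [Real.dist_eq] using this
  rw [eventually_atTop] at hev
  obtain ⟨T, hT⟩ := hev
  have hT1 : (1:ℝ) ≤ T := (hT T le_rfl).2
  have hT0 : (0:ℝ) ≤ T := by linarith
  refine ⟨B T ^ 2 - (2 * Φ / f₀ - ε) * Real.log T, B T ^ 2 - (2 * Φ / f₀ + ε) * Real.log T, ?_⟩
  filter_upwards [eventually_ge_atTop T] with t ht
  have ht1 : (1:ℝ) ≤ t := le_trans hT1 ht
  constructor
  · -- lower: B t² - (L-ε) log t monotone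
    have hd : ∀ s ∈ Ici T, HasDerivAt (fun u => B u ^ 2 - (2 * Φ / f₀ - ε) * Real.log u)
        ((fun u => 2 * Φ / A u - (2 * Φ / f₀ - ε) / u) s) s := by
      intro s hs
      have hs1 : (1:ℝ) ≤ s := le_trans hT1 hs
      have := (hB2deriv s (le_trans hT0 hs)).sub
        ((Real.hasDerivAt_log (by linarith : s ≠ 0)).const_mul (2 * Φ / f₀ - ε))
      exact this.congr_deriv (by simp [div_eq_mul_inv])
    have hm := monoAux hd (fun s hs => by
      have hs1 : (1:ℝ) ≤ s := le_trans hT1 hs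
      have hspos : (0:ℝ) < s := by linarith
      have hAs : 0 < A s := hApos s (le_trans hT0 hs)
      have habs := (hT s hs).1
      rw [abs_sub_lt_iff] at habs
      have h1 : (2 * Φ / f₀ - ε) * A s ≤ 2 * Φ * s := by
        have : 2 * Φ / f₀ - ε < 2 * Φ * s / A s := by linarith [habs.2]
        rw [lt_div_iff₀ hAs] at this
        linarith
      have h2 : (2 * Φ / f₀ - ε) / s ≤ 2 * Φ / A s := by
        rw [div_le_div_iff₀ hspos hAs]
        linarith
      linarith)
    have h5 : B T ^ 2 - (2 * Φ / f₀ - ε) * Real.log T ≤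
        B t ^ 2 - (2 * Φ / f₀ - ε) * Real.log t := hm self_mem_Ici ht ht
    linarith
  · -- upper
    have hd : ∀ s ∈ Ici T, HasDerivAt (fun u => (2 * Φ / f₀ + ε) * Real.log u - B u ^ 2)
        ((fun u => (2 * Φ / f₀ + ε) / u - 2 * Φ / A u) s) s := by
      intro s hs
      have hs1 : (1:ℝ) ≤ s := le_trans hT1 hs
      have := ((Real.hasDerivAt_log (by linarith : s ≠ 0)).const_mul
        (2 * Φ / f₀ + ε)).sub (hB2deriv s (le_trans hT0 hs))
      exact this.congr_deriv (by simp [div_eq_mul_inv])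
    have hm := monoAux hd (fun s hs => by
      have hs1 : (1:ℝ) ≤ s := le_trans hT1 hs
      have hspos : (0:ℝ) < s := by linarith
      have hAs : 0 < A s := hApos s (le_trans hT0 hs)
      have habs := (hT s hs).1
      rw [abs_sub_lt_iff] at habs
      have h1 : 2 * Φ * s ≤ (2 * Φ / f₀ + ε) * A s := by
        have : 2 * Φ * s / A s < 2 * Φ / f₀ + ε := by linarith [habs.1]
        rw [div_lt_iff₀ hAs] at this
        linarith
      have h2 : 2 * Φ / A s ≤ (2 * Φ / f₀ + ε) / s := by
        rw [div_le_div_iff₀ hAs hspos]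
        linarith
      linarith)
    have h5 : (2 * Φ / f₀ + ε) * Real.log T - B T ^ 2 ≤
        (2 * Φ / f₀ + ε) * Real.log t - B t ^ 2 := hm self_mem_Ici ht ht
    linarith
end

section
/- Solutions of the Ricci flow ODE system A' = C/B, B' = C/A, C' = -C²/(AB) on Nil³ with positive initial data satisfy A(t) ~ A₀ K^{-1/3} t^{1/3}, B(t) ~ B₀ K^{-1/3} t^{1/3}, C(t) ~ C₀ K^{1/3} t^{-1/3} as t → ∞, where K = A₀B₀/(3C₀). -/
open Set Filter

private lemma nil3_eqOn_Ici_of_deriv {f g f' : ℝ → ℝ}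
    (hf : ∀ t ∈ Ici (0:ℝ), HasDerivAt f (f' t) t)
    (hg : ∀ t ∈ Ici (0:ℝ), HasDerivAt g (f' t) t)
    (h0 : f 0 = g 0) : ∀ t ∈ Ici (0:ℝ), f t = g t := by
  intro t ht
  exact eq_of_has_deriv_right_eq (a := 0) (b := t) (f' := f')
    (fun x hx => (hf x hx.1).hasDerivWithinAt)
    (fun x hx => (hg x hx.1).hasDerivWithinAt)
    (fun x hx => (hf x hx.1).continuousAt.continuousWithinAt)
    (fun x hx => (hg x hx.1).continuousAt.continuousWithinAt)
    h0 t ⟨ht, le_refl t⟩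

/-- Ricci flow on `Nil³`: solutions of `A' = C/B`, `B' = C/A`, `C' = -C²/(AB)`
with positive initial data satisfy `A(t) ~ A₀K^{-1/3}t^{1/3}`,
`B(t) ~ B₀K^{-1/3}t^{1/3}`, `C(t) ~ C₀K^{1/3}t^{-1/3}`, where `K = A₀B₀/(3C₀)`. -/
theorem nil3_ricci_flow_asymptotics
    (A B C : ℝ → ℝ)
    (hApos : ∀ t ∈ Ici (0:ℝ), 0 < A t)
    (hBpos : ∀ t ∈ Ici (0:ℝ), 0 < B t)
    (hCpos : ∀ t ∈ Ici (0:ℝ), 0 < C t)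
    (hA : ∀ t ∈ Ici (0:ℝ), HasDerivAt A (C t / B t) t)
    (hB : ∀ t ∈ Ici (0:ℝ), HasDerivAt B (C t / A t) t)
    (hC : ∀ t ∈ Ici (0:ℝ), HasDerivAt C (-(C t) ^ 2 / (A t * B t)) t) :
    Tendsto (fun t => A t / (A 0 * (A 0 * B 0 / (3 * C 0)) ^ (-(1:ℝ)/3) * t ^ ((1:ℝ)/3)))
        atTop (nhds 1) ∧
    Tendsto (fun t => B t / (B 0 * (A 0 * B 0 / (3 * C 0)) ^ (-(1:ℝ)/3) * t ^ ((1:ℝ)/3)))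
        atTop (nhds 1) ∧
    Tendsto (fun t => C t / (C 0 * (A 0 * B 0 / (3 * C 0)) ^ ((1:ℝ)/3) * t ^ (-(1:ℝ)/3)))
        atTop (nhds 1) := by
  have h00 : (0:ℝ) ∈ Ici (0:ℝ) := Set.self_mem_Ici
  have ha0 : 0 < A 0 := hApos 0 h00
  have hb0 : 0 < B 0 := hBpos 0 h00
  have hc0 : 0 < C 0 := hCpos 0 h00
  set K : ℝ := A 0 * B 0 / (3 * C 0) with hKdef
  set v0 : ℝ := A 0 * B 0 / C 0 with hv0def
  have hv0 : 0 < v0 := by positivity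
  have hK : 0 < K := by positivity
  have hKv : K = v0 / 3 := by rw [hKdef, hv0def]; ring
  have hcv : C 0 = A 0 * B 0 / v0 := by
    rw [eq_div_iff hv0.ne', hv0def]; field_simp
  have hv00 : A 0 * B 0 / C 0 = v0 := hv0def.symm
  clear_value K v0
  have hx : ∀ t ∈ Ici (0:ℝ), 0 < v0 + 3 * t := by
    intro t ht
    have : (0:ℝ) ≤ t := ht
    linarith
  -- Step 1: A/B is constant
  have step1 : ∀ t ∈ Ici (0:ℝ), A t / B t = A 0 / B 0 := by
    apply nil3_eqOn_Ici_of_deriv (f' := fun _ => (0:ℝ))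
    · intro t ht
      have hAt := hApos t ht; have hBt := hBpos t ht
      have h := (hA t ht).div (hB t ht) hBt.ne'
      refine h.congr_deriv ?_
      field_simp
      ring
    · intro t ht; exact hasDerivAt_const t _
    · rfl
  -- Step 2: AB/C = v0 + 3t
  have step2 : ∀ t ∈ Ici (0:ℝ), A t * B t / C t = v0 + 3 * t := by
    apply nil3_eqOn_Ici_of_deriv (f' := fun _ => (3:ℝ))
    · intro t ht
      have hAt := hApos t ht; have hBt := hBpos t ht; have hCt := hCpos t ht
      have h := ((hA t ht).mul (hB t ht)).div (hC t ht) hCt.ne'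
      refine h.congr_deriv ?_
      simp only [Pi.mul_apply]
      field_simp
      ring
    · intro t ht
      simpa using ((hasDerivAt_id t).const_mul (3:ℝ)).const_add v0
    · simp [← hv00]
  have hCeq : ∀ t ∈ Ici (0:ℝ), C t = A t * B t / (v0 + 3 * t) := by
    intro t ht
    have h2 := step2 t ht
    rw [div_eq_iff (hCpos t ht).ne'] at h2
    rw [eq_div_iff (hx t ht).ne']
    linarith [h2]
  -- Step 3: AB * (v0+3t)^(-2/3) is constant
  have step3 : ∀ t ∈ Ici (0:ℝ),
      A t * B t * (v0 + 3 * t) ^ (-(2:ℝ)/3) = A 0 * B 0 * v0 ^ (-(2:ℝ)/3) := by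
    apply nil3_eqOn_Ici_of_deriv (f' := fun _ => (0:ℝ))
    · intro t ht
      have hAt := hApos t ht; have hBt := hBpos t ht
      have hxt := hx t ht
      have h1 : HasDerivAt (fun s : ℝ => v0 + 3 * s) 3 t := by
        simpa using ((hasDerivAt_id t).const_mul (3:ℝ)).const_add v0
      have hpow : HasDerivAt (fun s : ℝ => (v0 + 3 * s) ^ (-(2:ℝ)/3))
          ((3:ℝ) * (-(2:ℝ)/3) * (v0 + 3 * t) ^ (-(2:ℝ)/3 - 1)) t :=
        h1.rpow_const (Or.inl hxt.ne')
      have h := ((hA t ht).mul (hB t ht)).mul hpow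
      refine h.congr_deriv ?_
      simp only [Pi.mul_apply]
      rw [hCeq t ht]
      rw [show (-(2:ℝ)/3 - 1) = (-(2:ℝ)/3) + (-1) by ring, Real.rpow_add hxt,
        Real.rpow_neg_one]
      field_simp
      ring
    · intro t ht; exact hasDerivAt_const t _
    · simp
  -- Formula for AB
  have hAB : ∀ t ∈ Ici (0:ℝ),
      A t * B t = A 0 * B 0 * ((v0 + 3 * t) / v0) ^ ((2:ℝ)/3) := by
    intro t ht
    have h3 := step3 t ht
    have hxt := hx t ht
    have hp1 : 0 < (v0 + 3 * t) ^ ((2:ℝ)/3) := Real.rpow_pos_of_pos hxt _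
    have hp2 : 0 < v0 ^ ((2:ℝ)/3) := Real.rpow_pos_of_pos hv0 _
    rw [show (-(2:ℝ)/3) = -((2:ℝ)/3) by ring, Real.rpow_neg hxt.le,
      Real.rpow_neg hv0.le] at h3
    rw [Real.div_rpow hxt.le hv0.le]
    field_simp at h3 ⊢
    linarith [h3]
  have hy : ∀ t ∈ Ici (0:ℝ), 0 < (v0 + 3 * t) / v0 := fun t ht => div_pos (hx t ht) hv0
  -- Formula for A
  have hAf : ∀ t ∈ Ici (0:ℝ), A t = A 0 * ((v0 + 3 * t) / v0) ^ ((1:ℝ)/3) := by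
    intro t ht
    have hyt := hy t ht
    have hsq : (A t) ^ 2 = (A 0 * ((v0 + 3 * t) / v0) ^ ((1:ℝ)/3)) ^ 2 := by
      have h1 := step1 t ht
      have h2 := hAB t ht
      have hBt := hBpos t ht
      have e1 : (A t) ^ 2 = (A t / B t) * (A t * B t) := by
        field_simp
      rw [e1, h1, h2, mul_pow,
        ← Real.rpow_natCast (((v0 + 3 * t) / v0) ^ ((1:ℝ)/3)) 2,
        ← Real.rpow_mul hyt.le,
        show ((1:ℝ)/3 * ((2:ℕ):ℝ)) = (2:ℝ)/3 by push_cast; ring]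
      field_simp
    have h := congrArg Real.sqrt hsq
    rwa [Real.sqrt_sq (hApos t ht).le, Real.sqrt_sq (by positivity)] at h
  -- Formula for B
  have hBf : ∀ t ∈ Ici (0:ℝ), B t = B 0 * ((v0 + 3 * t) / v0) ^ ((1:ℝ)/3) := by
    intro t ht
    have hyt := hy t ht
    have hsq : (B t) ^ 2 = (B 0 * ((v0 + 3 * t) / v0) ^ ((1:ℝ)/3)) ^ 2 := by
      have h1 := step1 t ht
      have h2 := hAB t ht
      have hAt := hApos t ht
      have hBt := hBpos t ht
      have h1' : B t / A t = B 0 / A 0 := by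
        rw [div_eq_div_iff hBt.ne' hb0.ne'] at h1
        rw [div_eq_div_iff hAt.ne' ha0.ne']
        linarith [h1]
      have e1 : (B t) ^ 2 = (B t / A t) * (A t * B t) := by
        field_simp
      rw [e1, h1', h2, mul_pow,
        ← Real.rpow_natCast (((v0 + 3 * t) / v0) ^ ((1:ℝ)/3)) 2,
        ← Real.rpow_mul hyt.le,
        show ((1:ℝ)/3 * ((2:ℕ):ℝ)) = (2:ℝ)/3 by push_cast; ring]
      field_simp
    have h := congrArg Real.sqrt hsq
    rwa [Real.sqrt_sq (hBpos t ht).le, Real.sqrt_sq (by positivity)] at h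
  -- Formula for C
  have hCf : ∀ t ∈ Ici (0:ℝ), C t = C 0 * ((v0 + 3 * t) / v0) ^ (-(1:ℝ)/3) := by
    intro t ht
    have hxt := hx t ht
    have hyt := hy t ht
    rw [hCeq t ht, hAB t ht,
      show ((2:ℝ)/3) = (-(1:ℝ)/3) + 1 by ring, Real.rpow_add hyt, Real.rpow_one, hcv]
    field_simp
  -- The basic limit
  have hbase : Tendsto (fun t : ℝ => (v0 + 3 * t) / v0 * (v0 / 3) / t) atTop (nhds 1) := by
    have h1 : Tendsto (fun t : ℝ => 1 + v0 / 3 / t) atTop (nhds 1) := by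
      simpa using (tendsto_const_nhds (x := (1:ℝ))).add
        ((tendsto_const_nhds (x := v0 / 3)).div_atTop tendsto_id)
    apply h1.congr'
    filter_upwards [eventually_gt_atTop (0:ℝ)] with t ht
    field_simp
    ring
  refine ⟨?_, ?_, ?_⟩
  · -- A
    have h2 : Tendsto (fun t : ℝ => ((v0 + 3 * t) / v0 * (v0 / 3) / t) ^ ((1:ℝ)/3))
        atTop (nhds 1) := by
      simpa using hbase.rpow_const (Or.inr (by norm_num))
    apply h2.congr'
    filter_upwards [eventually_ge_atTop (1:ℝ)] with t ht
    have ht0 : (0:ℝ) < t := lt_of_lt_of_le one_pos ht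
    have htI : t ∈ Ici (0:ℝ) := ht0.le
    have hyt := hy t htI
    rw [hAf t htI, hKv,
      Real.div_rpow (by positivity) ht0.le,
      Real.mul_rpow hyt.le (by positivity : (0:ℝ) ≤ v0 / 3),
      show (-(1:ℝ)/3) = -((1:ℝ)/3) by ring, Real.rpow_neg (by positivity)]
    have p1 : 0 < ((v0 + 3 * t) / v0) ^ ((1:ℝ)/3) := Real.rpow_pos_of_pos hyt _
    have p2 : 0 < (v0 / 3) ^ ((1:ℝ)/3) := Real.rpow_pos_of_pos (by positivity) _
    have p3 : 0 < t ^ ((1:ℝ)/3) := Real.rpow_pos_of_pos ht0 _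
    field_simp
  · -- B
    have h2 : Tendsto (fun t : ℝ => ((v0 + 3 * t) / v0 * (v0 / 3) / t) ^ ((1:ℝ)/3))
        atTop (nhds 1) := by
      simpa using hbase.rpow_const (Or.inr (by norm_num))
    apply h2.congr'
    filter_upwards [eventually_ge_atTop (1:ℝ)] with t ht
    have ht0 : (0:ℝ) < t := lt_of_lt_of_le one_pos ht
    have htI : t ∈ Ici (0:ℝ) := ht0.le
    have hyt := hy t htI
    rw [hBf t htI, hKv,
      Real.div_rpow (by positivity) ht0.le,
      Real.mul_rpow hyt.le (by positivity : (0:ℝ) ≤ v0 / 3),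
      show (-(1:ℝ)/3) = -((1:ℝ)/3) by ring, Real.rpow_neg (by positivity)]
    have p1 : 0 < ((v0 + 3 * t) / v0) ^ ((1:ℝ)/3) := Real.rpow_pos_of_pos hyt _
    have p2 : 0 < (v0 / 3) ^ ((1:ℝ)/3) := Real.rpow_pos_of_pos (by positivity) _
    have p3 : 0 < t ^ ((1:ℝ)/3) := Real.rpow_pos_of_pos ht0 _
    field_simp
  · -- C
    have h2 : Tendsto (fun t : ℝ => ((v0 + 3 * t) / v0 * (v0 / 3) / t) ^ (-(1:ℝ)/3))
        atTop (nhds 1) := by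
      simpa using hbase.rpow_const (Or.inl one_ne_zero)
    apply h2.congr'
    filter_upwards [eventually_ge_atTop (1:ℝ)] with t ht
    have ht0 : (0:ℝ) < t := lt_of_lt_of_le one_pos ht
    have htI : t ∈ Ici (0:ℝ) := ht0.le
    have hyt := hy t htI
    rw [hCf t htI, hKv]
    rw [show (-(1:ℝ)/3) = -((1:ℝ)/3) by ring]
    rw [Real.rpow_neg (by positivity : (0:ℝ) ≤ (v0 + 3 * t) / v0 * (v0 / 3) / t),
      Real.rpow_neg hyt.le, Real.rpow_neg ht0.le,
      Real.div_rpow (by positivity) ht0.le,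
      Real.mul_rpow hyt.le (by positivity : (0:ℝ) ≤ v0 / 3)]
    have p1 : 0 < ((v0 + 3 * t) / v0) ^ ((1:ℝ)/3) := Real.rpow_pos_of_pos hyt _
    have p2 : 0 < (v0 / 3) ^ ((1:ℝ)/3) := Real.rpow_pos_of_pos (by positivity) _
    have p3 : 0 < t ^ ((1:ℝ)/3) := Real.rpow_pos_of_pos ht0 _
    field_simp
end
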